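/- For a compact K in a Stokes domain Ω there is M_K > 0 such that |C(φ(t,x))/Q(φ(t,x))| ≤ M_K/(1+|t|)² for all x ∈ K and all t ∈ ℝ. -/

import Mathlib

/-- For compact `K` in a Stokes domain `Ω` there is `M_K > 0` with
`|C(φ(t,x))/Q(φ(t,x))| ≤ M_K/(1+|t|)²` for all `x ∈ K`, `t ∈ ℝ`, where `φ` is
the real-time flow of `y' = 1/√Q(y)`, `C/Q = O((1+|x|)^{-(m+2)})` away from the
turning points, and `|φ(t,x)| ≥ C_K|t|^{2/(m+2)}` for large `|t|`. -/
theorem stmt7 (Q : Polynomial ℂ) (m : ℕ) (hm : Q.natDegree = m) (hm1 : 1 ≤ m)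
    (CQ : ℂ → ℂ) (Ω : Set ℂ) (φ : ℝ → ℂ → ℂ)
    (hΩ : IsOpen Ω) (hQ : ∀ x ∈ Ω, Q.eval x ≠ 0)
    (hCQ : ∀ x ∈ Ω, CQ x = (4 * Q.derivative.derivative.eval x * Q.eval x
        - 5 * (Q.derivative.eval x) ^ 2) / (16 * (Q.eval x) ^ 3))
    (hflowin : ∀ x ∈ Ω, ∀ t : ℝ, φ t x ∈ Ω)
    (hflowcont : ∀ t : ℝ, ContinuousOn (fun x => φ t x) Ω)
    (hcont : ∀ x ∈ Ω, Continuous fun t : ℝ => φ t x)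
    (hbound : ∃ c > (0 : ℝ), ∀ x ∈ Ω, ‖CQ x‖ ≤ c / (1 + ‖x‖) ^ (m + 2))
    (hlow : ∀ K : Set ℂ, K ⊆ Ω → IsCompact K →
      ∃ C_K > (0 : ℝ), ∃ T_K > (0 : ℝ), ∀ x ∈ K, ∀ t : ℝ, T_K ≤ |t| →
        C_K * |t| ^ ((2 : ℝ) / (m + 2)) ≤ ‖φ t x‖)
    (K : Set ℂ) (hK : K ⊆ Ω) (hKc : IsCompact K) :
    ∃ M_K > (0 : ℝ), ∀ x ∈ K, ∀ t : ℝ,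
      ‖CQ (φ t x)‖ ≤ M_K / (1 + |t|) ^ 2 := by
  obtain ⟨c, hc, hb⟩ := hbound
  obtain ⟨C_K, hCK, T_K, hTK, hlo⟩ := hlow K hK hKc
  refine ⟨max (c * (1 + T_K) ^ 2) (c * (1 + 1 / T_K) ^ 2 / C_K ^ (m + 2)),
    lt_max_of_lt_left (by positivity), ?_⟩
  intro x hx t
  have hφΩ : φ t x ∈ Ω := hflowin x (hK hx) t
  have hb' := hb _ hφΩ
  have hden : (0 : ℝ) < (1 + |t|) ^ 2 := by positivity
  rcases le_or_gt |t| T_K with hle | hgt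
  · -- small time: use the trivial bound ‖CQ‖ ≤ c
    have h2 : (1 : ℝ) ≤ (1 + ‖φ t x‖) ^ (m + 2) :=
      one_le_pow₀ (le_add_of_nonneg_right (norm_nonneg _))
    have h1 : ‖CQ (φ t x)‖ ≤ c := hb'.trans (div_le_self hc.le h2)
    have hA : ‖CQ (φ t x)‖ ≤ c * (1 + T_K) ^ 2 / (1 + |t|) ^ 2 := by
      rw [le_div_iff₀ hden]
      have hbb : (1 + |t|) ^ 2 ≤ (1 + T_K) ^ 2 := by nlinarith [abs_nonneg t]
      exact mul_le_mul h1 hbb (by positivity) hc.le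
    refine hA.trans ?_
    gcongr
    exact le_max_left _ _
  · have ht0 : (0 : ℝ) < |t| := hTK.trans hgt
    have h1 := hlo x hx t hgt.le
    have h2 : C_K * |t| ^ ((2 : ℝ) / (m + 2)) ≤ 1 + ‖φ t x‖ :=
      h1.trans (le_add_of_nonneg_left one_pos.le)
    have hpow : C_K ^ (m + 2) * |t| ^ 2 ≤ (1 + ‖φ t x‖) ^ (m + 2) := by
      have h3 : (C_K * |t| ^ ((2 : ℝ) / (m + 2))) ^ (m + 2)
          ≤ (1 + ‖φ t x‖) ^ (m + 2) := pow_le_pow_left₀ (by positivity) h2 _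
      refine le_trans (le_of_eq ?_) h3
      rw [mul_pow]
      congr 1
      rw [← Real.rpow_natCast (|t| ^ ((2 : ℝ) / (m + 2))) (m + 2),
        ← Real.rpow_mul (abs_nonneg t)]
      have hne : ((m : ℝ) + 2) ≠ 0 := by positivity
      have : (2 : ℝ) / (m + 2) * ((m + 2 : ℕ) : ℝ) = 2 := by
        push_cast; field_simp
      rw [this, show ((2 : ℝ)) = ((2 : ℕ) : ℝ) by norm_num, Real.rpow_natCast]
    have hC : (0 : ℝ) < C_K ^ (m + 2) := by positivity
    have hB : ‖CQ (φ t x)‖ ≤ c * (1 + 1 / T_K) ^ 2 / C_K ^ (m + 2) / (1 + |t|) ^ 2 := by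
      have step1 : ‖CQ (φ t x)‖ ≤ c / (C_K ^ (m + 2) * |t| ^ 2) := by
        refine hb'.trans ?_
        gcongr
      refine step1.trans ?_
      rw [div_le_div_iff₀ (by positivity) hden]
      have key : 1 + |t| ≤ (1 + 1 / T_K) * |t| := by
        have h4 : (1 : ℝ) ≤ |t| / T_K := (one_le_div hTK).mpr hgt.le
        have : (1 + 1 / T_K) * |t| = |t| + |t| / T_K := by ring
        rw [this]; linarith
      have h5 : c * (1 + |t|) ^ 2 ≤ c * ((1 + 1 / T_K) * |t|) ^ 2 :=
        mul_le_mul_of_nonneg_left (pow_le_pow_left₀ (by positivity) key 2) hc.le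
      refine h5.trans (le_of_eq ?_)
      field_simp
    refine hB.trans ?_
    gcongr
    exact le_max_right _ _
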